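/- arXiv:1705.04291 — 4 statements merged into one kernel-verified Lean document; each statement's English description precedes it below -/
import Mathlib

section
/- Let T be the vertex-weighted tree on 7 vertices {m, m1, m2, m3, u1, u2, u3} with edge set {m m1, m m2, m m3, m1 u1, m2 u2, m3 u3}, with positive vertex weights μ(m)=μ, μ(m_i)=μ_i', μ(u_i)=μ_i'' for i=1,2,3, and let T' be the vertex-weighted tree on the same weighted vertex set obtained from T by replacing edges m m3 and m1 u1 with edges m u1 and m1 m3. If μ_1'+μ_1'' ≤ μ_2'+μ_2'' ≤ μ_3'+μ_3'', then VWWI(T) < VWWI(T'). -/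
/-- The vertex-weighted Wiener index: `(1/2) ∑_{u,v} μ(u) μ(v) d_G(u,v)`. -/
noncomputable def VWWI {V : Type*} [Fintype V] (G : SimpleGraph V) (μ : V → ℝ) : ℝ :=
  (1 / 2) * ∑ u : V, ∑ v : V, μ u * μ v * (G.dist u v : ℝ)

/-- The tree `T` on vertices `m = 0, m₁ = 1, m₂ = 2, m₃ = 3, u₁ = 4, u₂ = 5, u₃ = 6`
with edges `m m₁, m m₂, m m₃, m₁ u₁, m₂ u₂, m₃ u₃`. -/
def Ttree : SimpleGraph (Fin 7) :=
  SimpleGraph.fromEdgeSet {s(0, 1), s(0, 2), s(0, 3), s(1, 4), s(2, 5), s(3, 6)}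

/-- The tree `T'` obtained from `T` by replacing edges `m m₃` and `m₁ u₁`
with edges `m u₁` and `m₁ m₃`. -/
def Ttree' : SimpleGraph (Fin 7) :=
  SimpleGraph.fromEdgeSet {s(0, 1), s(0, 2), s(0, 4), s(1, 3), s(2, 5), s(3, 6)}

section DistTable
variable {V : Type*} (G : SimpleGraph V) (A : V → V → Bool) (d : V → V → ℕ)

/-- From a certified distance table, deduce `G.dist`. -/
theorem dist_eq_table
    (hA : ∀ u v, G.Adj u v ↔ A u v = true)
    (h0 : ∀ u, d u u = 0)
    (hdiag : ∀ u v, d u v = 0 → u = v)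
    (hlip : ∀ u v w, A u v = true → d u w ≤ d v w + 1)
    (hstep : ∀ u v, d u v ≠ 0 → ∃ w, A v w = true ∧ d u w + 1 = d u v) :
    ∀ u v, G.dist u v = d u v := by
  have upper : ∀ n u v, d u v = n → ∃ p : G.Walk u v, p.length = n := by
    intro n
    induction n with
    | zero => intro u v h; obtain rfl := hdiag u v h; exact ⟨.nil, rfl⟩
    | succ n ih =>
      intro u v h
      obtain ⟨w, haw, hdw⟩ := hstep u v (by omega)
      obtain ⟨p, hp⟩ := ih u w (by omega)
      exact ⟨p.concat ((hA v w).2 haw).symm, by simp [hp]⟩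
  have lower : ∀ u v (p : G.Walk u v), d u v ≤ p.length := by
    intro u v p
    induction p with
    | nil => simp [h0]
    | @cons a b c h q ih =>
      have := hlip a b c ((hA a b).1 h)
      simpa using this.trans (by omega)
  intro u v
  obtain ⟨p, hp⟩ := upper (d u v) u v rfl
  have hr : G.Reachable u v := ⟨p⟩
  obtain ⟨q, hq⟩ := hr.exists_walk_length_eq_dist
  have h1 : G.dist u v ≤ d u v := hp ▸ SimpleGraph.dist_le p
  have h2 : d u v ≤ G.dist u v := hq ▸ lower u v q
  omega
end DistTable

def AT : Fin 7 → Fin 7 → Bool := fun u v =>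
  s(u, v) ∈ ({s(0,1), s(0,2), s(0,3), s(1,4), s(2,5), s(3,6)} : Finset (Sym2 (Fin 7)))

def AT' : Fin 7 → Fin 7 → Bool := fun u v =>
  s(u, v) ∈ ({s(0,1), s(0,2), s(0,4), s(1,3), s(2,5), s(3,6)} : Finset (Sym2 (Fin 7)))

def dT : Fin 7 → Fin 7 → ℕ :=
  ![![0,1,1,1,2,2,2], ![1,0,2,2,1,3,3], ![1,2,0,2,3,1,3], ![1,2,2,0,3,3,1],
    ![2,1,3,3,0,4,4], ![2,3,1,3,4,0,4], ![2,3,3,1,4,4,0]]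

def dT' : Fin 7 → Fin 7 → ℕ :=
  ![![0,1,1,2,1,2,3], ![1,0,2,1,2,3,2], ![1,2,0,3,2,1,4], ![2,1,3,0,3,4,1],
    ![1,2,2,3,0,3,4], ![2,3,1,4,3,0,5], ![3,2,4,1,4,5,0]]

lemma Ttree_adj : ∀ u v, Ttree.Adj u v ↔ AT u v = true := by
  intro u v
  rw [Ttree, SimpleGraph.fromEdgeSet_adj]
  constructor
  · rintro ⟨h, hne⟩
    simp only [Set.mem_insert_iff, Set.mem_singleton_iff] at h
    simp only [AT, Finset.mem_insert, Finset.mem_singleton, decide_eq_true_eq]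
    tauto
  · intro h
    simp only [AT, Finset.mem_insert, Finset.mem_singleton, decide_eq_true_eq] at h
    constructor
    · simp only [Set.mem_insert_iff, Set.mem_singleton_iff]; tauto
    · rcases h with h|h|h|h|h|h <;> rw [Sym2.eq_iff] at h <;>
        rcases h with ⟨rfl, rfl⟩|⟨rfl, rfl⟩ <;> decide

lemma Ttree'_adj : ∀ u v, Ttree'.Adj u v ↔ AT' u v = true := by
  intro u v
  rw [Ttree', SimpleGraph.fromEdgeSet_adj]
  constructor
  · rintro ⟨h, hne⟩
    simp only [Set.mem_insert_iff, Set.mem_singleton_iff] at h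
    simp only [AT', Finset.mem_insert, Finset.mem_singleton, decide_eq_true_eq]
    tauto
  · intro h
    simp only [AT', Finset.mem_insert, Finset.mem_singleton, decide_eq_true_eq] at h
    constructor
    · simp only [Set.mem_insert_iff, Set.mem_singleton_iff]; tauto
    · rcases h with h|h|h|h|h|h <;> rw [Sym2.eq_iff] at h <;>
        rcases h with ⟨rfl, rfl⟩|⟨rfl, rfl⟩ <;> decide

lemma Ttree_dist : ∀ u v, Ttree.dist u v = dT u v :=
  dist_eq_table Ttree AT dT Ttree_adj (by decide) (by decide) (by decide) (by decide)

lemma Ttree'_dist : ∀ u v, Ttree'.dist u v = dT' u v :=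
  dist_eq_table Ttree' AT' dT' Ttree'_adj (by decide) (by decide) (by decide) (by decide)

lemma vec7_five {α : Type*} (a b c d e f g : α) : ![a,b,c,d,e,f,g] 5 = f := rfl
lemma vec7_six {α : Type*} (a b c d e f g : α) : ![a,b,c,d,e,f,g] 6 = g := rfl

set_option maxHeartbeats 2000000 in
theorem VWWI_lt (μ μ₁' μ₂' μ₃' μ₁'' μ₂'' μ₃'' : ℝ)
    (hμ : 0 < μ) (hμ₁' : 0 < μ₁') (hμ₂' : 0 < μ₂') (hμ₃' : 0 < μ₃')
    (hμ₁'' : 0 < μ₁'') (hμ₂'' : 0 < μ₂'') (hμ₃'' : 0 < μ₃'')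
    (h12 : μ₁' + μ₁'' ≤ μ₂' + μ₂'') (h23 : μ₂' + μ₂'' ≤ μ₃' + μ₃'') :
    VWWI Ttree ![μ, μ₁', μ₂', μ₃', μ₁'', μ₂'', μ₃''] <
      VWWI Ttree' ![μ, μ₁', μ₂', μ₃', μ₁'', μ₂'', μ₃''] := by
  rw [VWWI, VWWI]
  simp only [Fin.sum_univ_seven, Ttree_dist, Ttree'_dist, dT, dT',
    Matrix.cons_val_zero, Matrix.cons_val_one, Matrix.head_cons,
    Matrix.cons_val_two, Matrix.tail_cons, Matrix.cons_val_three,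
    Matrix.cons_val_four, Matrix.cons_val_succ, vec7_five, vec7_six]
  push_cast
  have h1 : (0:ℝ) < μ + μ₂' + μ₂'' - μ₁' := by linarith
  have h2 : (0:ℝ) < μ₃' + μ₃'' - μ₁'' := by linarith
  have h := mul_pos h1 h2
  ring_nf at h ⊢
  linarith [h]
end

section
/- Let T be the vertex-weighted tree on 7 vertices {m, m1, m2, m3, u1, u2, u3} with edge set {m m1, m m2, m m3, m1 u1, m2 u2, m3 u3}, with real vertex weights μ(m)=μ, μ(m_i)=μ_i', μ(u_i)=μ_i'' for i=1,2,3, and let T' be the vertex-weighted tree on the same weighted vertex set obtained from T by replacing edges m m3 and m1 u1 with edges m u1 and m1 m3. Then VWWI(T') − VWWI(T) = (μ + μ_2' + μ_2'' − μ_1')(μ_3' + μ_3'' − μ_1''). -/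
/-- If `D` is a valid distance table for `G`, then `G.dist = D`. -/
lemma dist_eq_table_s1 {V : Type*} (G : SimpleGraph V) (D : V → V → ℕ)
    (h0 : ∀ u v, D u v = 0 ↔ u = v)
    (h1 : ∀ u v, u ≠ v → ∃ w, G.Adj u w ∧ D u v = D w v + 1)
    (h2 : ∀ u a b, G.Adj a b → D u a ≤ D u b + 1)
    (u v : V) : G.dist u v = D u v := by
  have walk : ∀ n (u v : V), D u v = n → ∃ p : G.Walk u v, p.length = n := by
    intro n
    induction n with
    | zero =>
      intro u v h
      have : u = v := (h0 u v).1 h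
      subst this
      exact ⟨SimpleGraph.Walk.nil, rfl⟩
    | succ n ih =>
      intro u v h
      have hne : u ≠ v := by
        intro e; subst e
        have := (h0 u u).2 rfl; omega
      obtain ⟨w, hw, hD⟩ := h1 u v hne
      obtain ⟨p, hp⟩ := ih w v (by omega)
      exact ⟨SimpleGraph.Walk.cons hw p, by simp [hp]⟩
  obtain ⟨p, hp⟩ := walk (D u v) u v rfl
  have hub : G.dist u v ≤ D u v := hp ▸ SimpleGraph.dist_le p
  have hreach : G.Reachable u v := ⟨p⟩
  obtain ⟨q, hq⟩ := hreach.exists_walk_length_eq_dist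
  have key : ∀ (a c : V) (r : G.Walk a c), D u c ≤ D u a + r.length := by
    intro a c r
    induction r with
    | nil => simp
    | cons hadj r ih =>
      simp only [SimpleGraph.Walk.length_cons]
      have h2' := h2 u _ _ hadj.symm
      omega
  have hk := key u v q
  rw [hq, (h0 u u).2 rfl] at hk
  omega

/-- Adjacency list relation for `Ttree`. -/
def RT (a b : Fin 7) : Prop :=
  (a, b) ∈ [((0:Fin 7),(1:Fin 7)),(1,0),(0,2),(2,0),(0,3),(3,0),(1,4),(4,1),(2,5),(5,2),(3,6),(6,3)]

/-- Adjacency list relation for `Ttree'`. -/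
def RT' (a b : Fin 7) : Prop :=
  (a, b) ∈ [((0:Fin 7),(1:Fin 7)),(1,0),(0,2),(2,0),(0,4),(4,0),(1,3),(3,1),(2,5),(5,2),(3,6),(6,3)]

instance : DecidableRel RT := fun a b => inferInstanceAs (Decidable (_ ∈ _))
instance : DecidableRel RT' := fun a b => inferInstanceAs (Decidable (_ ∈ _))

/-- Distance table of `Ttree`. -/
def DT : Fin 7 → Fin 7 → ℕ :=
  !![0,1,1,1,2,2,2;
     1,0,2,2,1,3,3;
     1,2,0,2,3,1,3;
     1,2,2,0,3,3,1;
     2,1,3,3,0,4,4;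
     2,3,1,3,4,0,4;
     2,3,3,1,4,4,0]

/-- Distance table of `Ttree'`. -/
def DT' : Fin 7 → Fin 7 → ℕ :=
  !![0,1,1,2,1,2,3;
     1,0,2,1,2,3,2;
     1,2,0,3,2,1,4;
     2,1,3,0,3,4,1;
     1,2,2,3,0,3,4;
     2,3,1,4,3,0,5;
     3,2,4,1,4,5,0]

lemma adjT : ∀ a b : Fin 7, Ttree.Adj a b ↔ RT a b := by
  simp only [Ttree, SimpleGraph.fromEdgeSet_adj, Set.mem_insert_iff, Set.mem_singleton_iff, RT]
  decide

lemma adjT' : ∀ a b : Fin 7, Ttree'.Adj a b ↔ RT' a b := by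
  simp only [Ttree', SimpleGraph.fromEdgeSet_adj, Set.mem_insert_iff, Set.mem_singleton_iff, RT']
  decide

lemma distT (u v : Fin 7) : Ttree.dist u v = DT u v := by
  apply dist_eq_table_s1
  · decide
  · have h : ∀ u v : Fin 7, u ≠ v → ∃ w, RT u w ∧ DT u v = DT w v + 1 := by decide
    intro u v hne
    obtain ⟨w, hw, hd⟩ := h u v hne
    exact ⟨w, (adjT u w).2 hw, hd⟩
  · have h : ∀ u a b : Fin 7, RT a b → DT u a ≤ DT u b + 1 := by decide
    intro u a b hab
    exact h u a b ((adjT a b).1 hab)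

lemma distT' (u v : Fin 7) : Ttree'.dist u v = DT' u v := by
  apply dist_eq_table_s1
  · decide
  · have h : ∀ u v : Fin 7, u ≠ v → ∃ w, RT' u w ∧ DT' u v = DT' w v + 1 := by decide
    intro u v hne
    obtain ⟨w, hw, hd⟩ := h u v hne
    exact ⟨w, (adjT' u w).2 hw, hd⟩
  · have h : ∀ u a b : Fin 7, RT' a b → DT' u a ≤ DT' u b + 1 := by decide
    intro u a b hab
    exact h u a b ((adjT' a b).1 hab)

theorem VWWI_diff (μ μ₁' μ₂' μ₃' μ₁'' μ₂'' μ₃'' : ℝ) :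
    VWWI Ttree' ![μ, μ₁', μ₂', μ₃', μ₁'', μ₂'', μ₃''] -
      VWWI Ttree ![μ, μ₁', μ₂', μ₃', μ₁'', μ₂'', μ₃''] =
      (μ + μ₂' + μ₂'' - μ₁') * (μ₃' + μ₃'' - μ₁'') := by
  simp only [VWWI, distT, distT', DT, DT']
  simp only [Fin.sum_univ_succ, Finset.sum_const, Finset.card_univ, Fintype.card_fin,
    Matrix.cons_val_zero, Matrix.cons_val_succ, Matrix.of_apply, Fin.sum_univ_zero]
  push_cast
  ring
end

section
/- Let T be a vertex-weighted caterpillar with backbone v_1, ..., v_q and weight function μ_T. Let W(T) denote the set of pendent vertices of T, let w_T(k) = ∑_{v ∈ A_T(k)} μ_T(v) be the weight associated with backbone position k, and let p_T(k) = ∑_{l=1}^q w_T(l)|k−l| be the price of position k. Then VWWI(T) = (1/2) ∑_{k=1}^q w_T(k) p_T(k) + (∑_{v ∈ W(T)} μ_T(v)) (∑_{v ∈ V(T)} μ_T(v)) − ∑_{v ∈ W(T)} μ_T(v)². -/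
open scoped Classical

/-- Degree of a vertex: the number of its neighbors. -/
noncomputable def degN {V : Type*} (G : SimpleGraph V) (v : V) : ℕ :=
  (G.neighborSet v).ncard

/-- The set of internal (non-pendent) vertices of a graph. -/
def internalSet {V : Type*} (G : SimpleGraph V) : Set V := {v | degN G v ≠ 1}

/-- A path is a tree with exactly two pendent vertices. -/
def IsPathGraph {V : Type*} (G : SimpleGraph V) : Prop :=
  G.IsTree ∧ {v | degN G v = 1}.ncard = 2

/-- A caterpillar is a tree in which deleting all pendent vertices
(and their incident edges) yields a path. -/
def IsCaterpillar {V : Type*} (G : SimpleGraph V) : Prop :=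
  G.IsTree ∧ IsPathGraph (G.induce (internalSet G))

/-- Membership of a vertex-weighted tree `(G, w)` in `WT(μ, d)`: `G` is a tree whose
vertices can be indexed so that the `i`-th vertex has degree `d i` and weight `μ i`. -/
def memWT {n : ℕ} (d : Fin n → ℕ) (μ : Fin n → ℝ)
    (G : SimpleGraph (Fin n)) (w : Fin n → ℝ) : Prop :=
  G.IsTree ∧ ∃ σ : Equiv.Perm (Fin n), ∀ i, degN G (σ i) = d i ∧ w (σ i) = μ i

/-- `b : Fin q → V` enumerates, in path order, the backbone (the internal vertices)
of the caterpillar `G`. -/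
def IsBackbone {V : Type*} (G : SimpleGraph V) {q : ℕ} (b : Fin q → V) : Prop :=
  Function.Injective b ∧ Set.range b = internalSet G ∧
    ∀ (k : ℕ) (h : k + 1 < q), G.Adj (b ⟨k, by omega⟩) (b ⟨k + 1, h⟩)

/-- `v` is associated with backbone position `k`: either `v` is the `k`-th backbone
vertex, or `v` is pendent and adjacent to it. -/
def assoc {V : Type*} (G : SimpleGraph V) {q : ℕ} (b : Fin q → V) (k : Fin q) (v : V) : Prop :=
  v = b k ∨ (degN G v = 1 ∧ G.Adj v (b k))

/-- A finite sequence is V-shaped: it first (weakly) decreases, then (weakly) increases. -/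
def VShaped {α : Type*} [Preorder α] {q : ℕ} (a : Fin q → α) : Prop :=
  ∃ kb : Fin q,
    (∀ (k : ℕ) (h : k + 1 < q), k < kb.val → a ⟨k + 1, h⟩ ≤ a ⟨k, by omega⟩) ∧
    (∀ (k : ℕ) (h : k + 1 < q), kb.val ≤ k → a ⟨k, by omega⟩ ≤ a ⟨k + 1, h⟩)

/-- Total weight of the vertices associated with backbone position `k`. -/
noncomputable def wAssoc {V : Type*} [Fintype V] (G : SimpleGraph V) (μ : V → ℝ)
    {q : ℕ} (b : Fin q → V) (k : Fin q) : ℝ :=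
  ∑ v : V, if assoc G b k v then μ v else 0

/-- The price of backbone position `k`: `p(k) = ∑_l w(l) |k - l|`. -/
noncomputable def price {V : Type*} [Fintype V] (G : SimpleGraph V) (μ : V → ℝ)
    {q : ℕ} (b : Fin q → V) (k : Fin q) : ℝ :=
  ∑ l : Fin q, wAssoc G μ b l * ((((k.val : ℤ) - (l.val : ℤ)).natAbs : ℕ) : ℝ)

namespace CatAux

open SimpleGraph

variable {V : Type*} {G : SimpleGraph V}

lemma dist_eq_length_of_path (ht : G.IsTree) {u v : V} (p : G.Walk u v) (hp : p.IsPath) :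
    G.dist u v = p.length := by
  obtain ⟨p', hp', hl⟩ := ht.isConnected.exists_path_of_dist u v
  obtain ⟨pp, _, hun⟩ := ht.existsUnique_path u v
  rw [← hl, hun p hp, ← hun p' hp']

lemma exists_nbhd {u : V} (hdeg : degN G u = 1) : ∃ n, G.Adj u n := by
  obtain ⟨a, ha⟩ := Set.ncard_eq_one.mp hdeg
  have : a ∈ G.neighborSet u := ha ▸ Set.mem_singleton a
  exact ⟨a, this⟩

lemma nbhd_eq_singleton {u n : V} (hdeg : degN G u = 1) (hn : G.Adj u n) :
    G.neighborSet u = {n} := by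
  obtain ⟨a, ha⟩ := Set.ncard_eq_one.mp hdeg
  have hna : n ∈ G.neighborSet u := hn
  rw [ha] at hna ⊢
  rw [Set.mem_singleton_iff] at hna
  rw [hna]

lemma dist_pendant (ht : G.IsTree) {u n x : V} (hdeg : degN G u = 1) (hn : G.Adj u n)
    (hx : x ≠ u) : G.dist u x = G.dist n x + 1 := by
  obtain ⟨p, hp, hl⟩ := ht.isConnected.exists_path_of_dist u x
  cases p with
  | nil => exact absurd rfl hx
  | cons h' p' =>
    rename_i w
    have hw : n = w := by
      have hmem : w ∈ G.neighborSet u := h'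
      rw [nbhd_eq_singleton hdeg hn, Set.mem_singleton_iff] at hmem
      exact hmem.symm
    subst hw
    have h1 : G.dist n x ≤ p'.length := SimpleGraph.dist_le p'
    have h2 : G.dist u x ≤ G.dist u n + G.dist n x := ht.isConnected.dist_triangle
    have h3 : G.dist u n = 1 := SimpleGraph.dist_eq_one_iff_adj.mpr hn
    have h4 : p'.length + 1 = G.dist u x := by simpa using hl
    omega

lemma pendant_neighbor_internal (ht : G.IsTree) (hq : ∃ w, degN G w ≠ 1)
    {u n : V} (hdeg : degN G u = 1) (hn : G.Adj u n) : degN G n ≠ 1 := by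
  intro hdn
  obtain ⟨w, hw⟩ := hq
  have hwu : w ≠ u := fun e => hw (e ▸ hdeg)
  have hwn : w ≠ n := fun e => hw (e ▸ hdn)
  obtain ⟨p, hp, hl⟩ := ht.isConnected.exists_path_of_dist n w
  cases p with
  | nil => exact hwn rfl
  | cons h1 p1 =>
    rename_i a
    have ha : u = a := by
      have hmem : a ∈ G.neighborSet n := h1
      rw [nbhd_eq_singleton hdn hn.symm, Set.mem_singleton_iff] at hmem
      exact hmem.symm
    subst ha
    cases p1 with
    | nil => exact hwu rfl
    | cons h2 p2 =>
      rename_i c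
      have hc : n = c := by
        have hmem : c ∈ G.neighborSet u := h2
        rw [nbhd_eq_singleton hdeg hn, Set.mem_singleton_iff] at hmem
        exact hmem.symm
      subst hc
      have hle : G.dist n w ≤ p2.length := SimpleGraph.dist_le p2
      have : p2.length + 1 + 1 = G.dist n w := by simpa using hl
      omega

variable {q : ℕ} {b : Fin q → V}

noncomputable def bwalk
    (hadj : ∀ (k : ℕ) (h : k + 1 < q), G.Adj (b ⟨k, by omega⟩) (b ⟨k + 1, h⟩)) :
    (k m : ℕ) → (h : k + m < q) → G.Walk (b ⟨k, by omega⟩) (b ⟨k + m, h⟩)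
  | _, 0, _ => SimpleGraph.Walk.nil
  | k, m + 1, h =>
      SimpleGraph.Walk.cons (hadj k (by omega))
        ((bwalk hadj (k + 1) m (by omega)).copy rfl
          (congrArg b (Fin.ext (by show k + 1 + m = k + (m + 1); omega))))

lemma bwalk_length (hadj : ∀ (k : ℕ) (h : k + 1 < q), G.Adj (b ⟨k, by omega⟩) (b ⟨k + 1, h⟩))
    (k m : ℕ) (h : k + m < q) : (bwalk hadj k m h).length = m := by
  induction m generalizing k with
  | zero => rfl
  | succ m ih => simp [bwalk, ih]

lemma bwalk_support (hadj : ∀ (k : ℕ) (h : k + 1 < q), G.Adj (b ⟨k, by omega⟩) (b ⟨k + 1, h⟩))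
    (k m : ℕ) (h : k + m < q) : ∀ x ∈ (bwalk hadj k m h).support,
    ∃ (i : ℕ) (hi : i < q), k ≤ i ∧ i ≤ k + m ∧ x = b ⟨i, hi⟩ := by
  induction m generalizing k with
  | zero =>
    intro x hx
    simp [bwalk] at hx
    exact ⟨k, by omega, le_refl _, by omega, hx⟩
  | succ m ih =>
    intro x hx
    simp only [bwalk, SimpleGraph.Walk.support_cons, SimpleGraph.Walk.support_copy,
      List.mem_cons] at hx
    rcases hx with rfl | hx
    · exact ⟨k, by omega, le_refl _, by omega, rfl⟩
    · obtain ⟨i, hi, h1, h2, rfl⟩ := ih (k + 1) (by omega) x hx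
      exact ⟨i, hi, by omega, by omega, rfl⟩

lemma bwalk_isPath (binj : Function.Injective b)
    (hadj : ∀ (k : ℕ) (h : k + 1 < q), G.Adj (b ⟨k, by omega⟩) (b ⟨k + 1, h⟩))
    (k m : ℕ) (h : k + m < q) : (bwalk hadj k m h).IsPath := by
  induction m generalizing k with
  | zero => constructor <;> simp [bwalk]
  | succ m ih =>
    simp only [bwalk, SimpleGraph.Walk.cons_isPath_iff, SimpleGraph.Walk.isPath_copy,
      SimpleGraph.Walk.support_copy]
    refine ⟨ih (k + 1) (by omega), fun hmem => ?_⟩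
    obtain ⟨i, hi, h1, h2, heq⟩ := bwalk_support hadj (k + 1) m (by omega) _ hmem
    have := binj heq
    have : k = i := congrArg Fin.val this
    omega

lemma bdist (ht : G.IsTree) (binj : Function.Injective b)
    (hadj : ∀ (k : ℕ) (h : k + 1 < q), G.Adj (b ⟨k, by omega⟩) (b ⟨k + 1, h⟩))
    (k m : ℕ) (h : k + m < q) :
    G.dist (b ⟨k, by omega⟩) (b ⟨k + m, h⟩) = m := by
  rw [dist_eq_length_of_path ht _ (bwalk_isPath binj hadj k m h), bwalk_length]

lemma bdist' (ht : G.IsTree) (binj : Function.Injective b)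
    (hadj : ∀ (k : ℕ) (h : k + 1 < q), G.Adj (b ⟨k, by omega⟩) (b ⟨k + 1, h⟩))
    (k l : Fin q) :
    G.dist (b k) (b l) = ((k.val : ℤ) - l.val).natAbs := by
  rcases le_total k.val l.val with hkl | hkl
  · have hd := bdist ht binj hadj k.val (l.val - k.val) (by omega)
    have e1 : (⟨k.val, by omega⟩ : Fin q) = k := rfl
    have e2 : (⟨k.val + (l.val - k.val), by omega⟩ : Fin q) = l := Fin.ext (by show k.val + (l.val - k.val) = l.val; omega)
    rw [e1, e2] at hd
    rw [hd]
    omega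
  · have hd := bdist ht binj hadj l.val (k.val - l.val) (by omega)
    have e1 : (⟨l.val, by omega⟩ : Fin q) = l := rfl
    have e2 : (⟨l.val + (k.val - l.val), by omega⟩ : Fin q) = k := Fin.ext (by show l.val + (k.val - l.val) = k.val; omega)
    rw [e1, e2] at hd
    rw [SimpleGraph.dist_comm, hd]
    omega

end CatAux

theorem VWWI_caterpillar_formula {V : Type*} [Fintype V] (G : SimpleGraph V)
    (μ : V → ℝ) (q : ℕ) (hq : 1 ≤ q) (b : Fin q → V)
    (htree : G.IsTree) (hb : IsBackbone G b) :
    VWWI G μ =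
      (1 / 2) * (∑ k : Fin q, wAssoc G μ b k * price G μ b k) +
        (∑ v : V, if degN G v = 1 then μ v else 0) * (∑ v : V, μ v) -
        ∑ v : V, if degN G v = 1 then (μ v) ^ 2 else 0 := by
  classical
  obtain ⟨binj, brange, hadj⟩ := hb
  have hBint : ∀ k : Fin q, degN G (b k) ≠ 1 := fun k => by
    have : b k ∈ internalSet G := brange ▸ Set.mem_range_self k
    exact this
  have hint : ∀ v : V, degN G v = 1 → ∀ n, G.Adj v n → degN G n ≠ 1 := by
    intro v hv n hvn
    exact CatAux.pendant_neighbor_internal htree ⟨b ⟨0, by omega⟩, hBint ⟨0, by omega⟩⟩ hv hvn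
  -- existence and uniqueness of the associated backbone position
  have hexu : ∀ v : V, ∃ k : Fin q, assoc G b k v ∧ ∀ k', assoc G b k' v → k' = k := by
    intro v
    by_cases hv : degN G v = 1
    · obtain ⟨n, hn⟩ := CatAux.exists_nbhd hv
      have hnint : n ∈ Set.range b := by rw [brange]; exact hint v hv n hn
      obtain ⟨k, hk⟩ := hnint
      refine ⟨k, Or.inr ⟨hv, hk ▸ hn⟩, ?_⟩
      intro k' hk'
      rcases hk' with hk' | ⟨-, hadj'⟩
      · exact absurd (hk' ▸ hv) (hBint k')
      · have : b k' ∈ G.neighborSet v := hadj'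
        rw [CatAux.nbhd_eq_singleton hv hn, Set.mem_singleton_iff] at this
        exact binj (this.trans hk.symm)
    · have hvint : v ∈ Set.range b := by rw [brange]; exact hv
      obtain ⟨k, hk⟩ := hvint
      refine ⟨k, Or.inl hk.symm, ?_⟩
      intro k' hk'
      rcases hk' with hk' | ⟨hv', -⟩
      · exact binj (hk'.symm.trans hk.symm)
      · exact absurd hv' hv
  choose pos hpos hposu using hexu
  -- basic structure of each vertex
  have hstruct : ∀ x : V, (degN G x ≠ 1 ∧ x = b (pos x)) ∨ (degN G x = 1 ∧ G.Adj x (b (pos x))) := by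
    intro x
    by_cases hx : degN G x = 1
    · rcases hpos x with h | ⟨-, h⟩
      · exact absurd (h ▸ hx) (hBint (pos x))
      · exact Or.inr ⟨hx, h⟩
    · rcases hpos x with h | ⟨h1, -⟩
      · exact Or.inl ⟨hx, h⟩
      · exact absurd h1 hx
  -- the distance formula
  have hdist : ∀ u v : V, u ≠ v → G.dist u v
      = (((pos u).val : ℤ) - ((pos v).val : ℤ)).natAbs
        + (if degN G u = 1 then 1 else 0) + (if degN G v = 1 then 1 else 0) := by
    intro u v huv
    have hb' := CatAux.bdist' htree binj hadj
    rcases hstruct u with ⟨hu, hub⟩ | ⟨hu, hub⟩ <;> rcases hstruct v with ⟨hv, hvb⟩ | ⟨hv, hvb⟩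
    · rw [if_neg hu, if_neg hv]
      have h1 : G.dist u v = G.dist (b (pos u)) (b (pos v)) := by rw [← hub, ← hvb]
      rw [h1, hb' (pos u) (pos v)]
      try omega
    · rw [if_neg hu, if_pos hv]
      have h1 : G.dist v u = G.dist (b (pos v)) u + 1 :=
        CatAux.dist_pendant htree hv hvb huv
      have h2 : G.dist (b (pos v)) u = G.dist (b (pos v)) (b (pos u)) := by rw [← hub]
      rw [SimpleGraph.dist_comm, h1, h2, hb' (pos v) (pos u)]
      try omega
    · rw [if_pos hu, if_neg hv]
      have h1 : G.dist u v = G.dist (b (pos u)) v + 1 :=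
        CatAux.dist_pendant htree hu hub huv.symm
      have h2 : G.dist (b (pos u)) v = G.dist (b (pos u)) (b (pos v)) := by rw [← hvb]
      rw [h1, h2, hb' (pos u) (pos v)]
      try omega
    · rw [if_pos hu, if_pos hv]
      have h1 : G.dist u v = G.dist (b (pos u)) v + 1 :=
        CatAux.dist_pendant htree hu hub huv.symm
      have hne : b (pos u) ≠ v := fun e => (hBint (pos u)) (e ▸ hv)
      have h2 : G.dist v (b (pos u)) = G.dist (b (pos v)) (b (pos u)) + 1 :=
        CatAux.dist_pendant htree hv hvb hne
      rw [h1, SimpleGraph.dist_comm, h2, hb' (pos v) (pos u)]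
      try omega
  -- wAssoc in terms of pos
  have hw : ∀ k : Fin q, wAssoc G μ b k = ∑ v : V, if pos v = k then μ v else 0 := by
    intro k
    unfold wAssoc
    refine Finset.sum_congr rfl fun v _ => ?_
    by_cases h : pos v = k
    · rw [if_pos h, if_pos (h ▸ hpos v)]
    · rw [if_neg h, if_neg (fun ha => h (hposu v k ha).symm)]
  -- the key resummation lemma
  have key2 : ∀ g : Fin q → ℝ, ∑ v : V, μ v * g (pos v) = ∑ k : Fin q, wAssoc G μ b k * g k := by
    intro g
    calc ∑ v : V, μ v * g (pos v)
        = ∑ v : V, ∑ k : Fin q, if pos v = k then μ v * g k else 0 := by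
          refine Finset.sum_congr rfl fun v _ => ?_
          rw [Finset.sum_ite_eq]
          simp
      _ = ∑ k : Fin q, ∑ v : V, if pos v = k then μ v * g k else 0 := Finset.sum_comm
      _ = ∑ k : Fin q, wAssoc G μ b k * g k := by
          refine Finset.sum_congr rfl fun k _ => ?_
          rw [hw, Finset.sum_mul]
          refine Finset.sum_congr rfl fun v _ => ?_
          rw [ite_mul, zero_mul]
  have hT : ∑ k : Fin q, wAssoc G μ b k * price G μ b k
      = ∑ u : V, ∑ v : V, μ u * μ v
          * (((((pos u).val : ℤ) - ((pos v).val : ℤ)).natAbs : ℕ) : ℝ) := by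
    rw [← key2 (price G μ b)]
    refine Finset.sum_congr rfl fun u _ => ?_
    unfold price
    rw [← key2 (fun l => (((((pos u).val : ℤ) - (l.val : ℤ)).natAbs : ℕ) : ℝ)), Finset.mul_sum]
    refine Finset.sum_congr rfl fun v _ => ?_
    ring
  -- pointwise decomposition of the distance term
  have hDD : ∀ u v : V, μ u * μ v * (G.dist u v : ℝ)
      = μ u * μ v * (((((pos u).val : ℤ) - ((pos v).val : ℤ)).natAbs : ℕ) : ℝ)
        + μ u * μ v * (if degN G u = 1 then (1 : ℝ) else 0)
        + μ u * μ v * (if degN G v = 1 then (1 : ℝ) else 0)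
        - (if u = v then 2 * (μ u * μ v * (if degN G u = 1 then (1 : ℝ) else 0)) else 0) := by
    intro u v
    by_cases huv : u = v
    · subst huv
      by_cases hu : degN G u = 1 <;> simp [SimpleGraph.dist_self, hu] <;> ring
    · rw [hdist u v huv, if_neg huv]
      by_cases hu : degN G u = 1 <;> by_cases hv : degN G v = 1 <;>
        simp [hu, hv] <;> push_cast <;> ring
  have eA : ∑ u : V, ∑ v : V, μ u * μ v * (if degN G u = 1 then (1 : ℝ) else 0)
      = (∑ v : V, if degN G v = 1 then μ v else 0) * (∑ v : V, μ v) := by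
    rw [Finset.sum_mul_sum]
    refine Finset.sum_congr rfl fun u _ => Finset.sum_congr rfl fun v _ => ?_
    by_cases hu : degN G u = 1 <;> simp [hu] <;> ring
  have eB : ∑ u : V, ∑ v : V, μ u * μ v * (if degN G v = 1 then (1 : ℝ) else 0)
      = (∑ v : V, μ v) * (∑ v : V, if degN G v = 1 then μ v else 0) := by
    rw [Finset.sum_mul_sum]
    refine Finset.sum_congr rfl fun u _ => Finset.sum_congr rfl fun v _ => ?_
    by_cases hv : degN G v = 1 <;> simp [hv] <;> ring
  have eC : ∑ u : V, ∑ v : V,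
        (if u = v then 2 * (μ u * μ v * (if degN G u = 1 then (1 : ℝ) else 0)) else 0)
      = 2 * ∑ v : V, (if degN G v = 1 then (μ v) ^ 2 else 0) := by
    rw [Finset.mul_sum]
    refine Finset.sum_congr rfl fun u _ => ?_
    rw [Finset.sum_ite_eq]
    by_cases hu : degN G u = 1 <;> simp [hu] <;> ring
  have hsplit : ∑ u : V, ∑ v : V, μ u * μ v * (G.dist u v : ℝ)
      = (∑ k : Fin q, wAssoc G μ b k * price G μ b k)
        + (∑ v : V, if degN G v = 1 then μ v else 0) * (∑ v : V, μ v)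
        + (∑ v : V, μ v) * (∑ v : V, if degN G v = 1 then μ v else 0)
        - 2 * ∑ v : V, (if degN G v = 1 then (μ v) ^ 2 else 0) := by
    calc ∑ u : V, ∑ v : V, μ u * μ v * (G.dist u v : ℝ)
        = ∑ u : V, ∑ v : V,
            (μ u * μ v * (((((pos u).val : ℤ) - ((pos v).val : ℤ)).natAbs : ℕ) : ℝ)
              + μ u * μ v * (if degN G u = 1 then (1 : ℝ) else 0)
              + μ u * μ v * (if degN G v = 1 then (1 : ℝ) else 0)
              - (if u = v then 2 * (μ u * μ v * (if degN G u = 1 then (1 : ℝ) else 0)) else 0)) :=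
          Finset.sum_congr rfl fun u _ => Finset.sum_congr rfl fun v _ => hDD u v
      _ = _ := by
          simp only [Finset.sum_add_distrib, Finset.sum_sub_distrib]
          rw [← hT, eA, eB, eC]
  rw [VWWI, hsplit]
  ring
end

section
/- Let q ≥ 1 and let P be the q × q real matrix with entries P_{kl} = q − 1 − |k − l|. Then P is positive semidefinite; moreover P = ∑_{i=1}^{q−1} (e_i e_iᵀ + f_i f_iᵀ), where e_i ∈ ℝ^q is the vector whose first i coordinates are 1 and remaining coordinates are 0, and f_i ∈ ℝ^q is the vector whose first i coordinates are 0 and remaining q − i coordinates are 1. -/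
open Matrix

/-- The `q × q` matrix with entries `P_{kl} = q - 1 - |k - l|`. -/
def Pmat (q : ℕ) : Matrix (Fin q) (Fin q) ℝ :=
  fun k l => (q : ℝ) - 1 - |((k : ℕ) : ℝ) - ((l : ℕ) : ℝ)|

/-- `e i ∈ ℝ^q`: the first `i` coordinates are `1`, the rest are `0`. -/
def onesVec (q i : ℕ) : Fin q → ℝ := fun k => if (k : ℕ) < i then 1 else 0

/-- `f i ∈ ℝ^q`: the first `i` coordinates are `0`, the remaining `q - i` are `1`. -/
def onesVec' (q i : ℕ) : Fin q → ℝ := fun k => if (k : ℕ) < i then 0 else 1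

lemma vecMulVec_self_posSemidef {q : ℕ} (v : Fin q → ℝ) :
    (Matrix.vecMulVec v v).PosSemidef := by
  rw [Matrix.posSemidef_iff_dotProduct_mulVec]
  constructor
  · ext k l; simp [Matrix.IsHermitian, vecMulVec_apply, Matrix.conjTranspose_apply, mul_comm]
  · intro x
    have : star x ⬝ᵥ (Matrix.vecMulVec v v *ᵥ x) = (v ⬝ᵥ x) * (v ⬝ᵥ x) := by
      simp [dotProduct, mulVec, vecMulVec_apply, Finset.mul_sum, Finset.sum_mul]
      congr 1; ext k; congr 1; ext l; ring
    rw [this]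
    exact mul_self_nonneg _

lemma decomp (q : ℕ) (hq : 1 ≤ q) :
      Pmat q = ∑ i ∈ Finset.Icc 1 (q - 1),
        (Matrix.vecMulVec (onesVec q i) (onesVec q i) +
          Matrix.vecMulVec (onesVec' q i) (onesVec' q i)) := by
  ext k l
  simp only [Matrix.sum_apply, Matrix.add_apply, vecMulVec_apply, onesVec, onesVec', Pmat]
  have h1 : ∀ i : ℕ, ((if (k:ℕ) < i then (1:ℝ) else 0) * (if (l:ℕ) < i then 1 else 0)
      + (if (k:ℕ) < i then (0:ℝ) else 1) * (if (l:ℕ) < i then 0 else 1))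
      = (if max (k:ℕ) (l:ℕ) < i then 1 else 0) + (if i ≤ min (k:ℕ) (l:ℕ) then 1 else 0) := by
    intro i
    rcases lt_or_ge (k:ℕ) i with h | h <;> rcases lt_or_ge (l:ℕ) i with h' | h'
    · rw [if_pos h, if_pos h', if_pos h, if_pos h', if_pos (max_lt h h'),
        if_neg (by omega : ¬ i ≤ min (k:ℕ) (l:ℕ))]; norm_num
    · rw [if_pos h, if_neg (not_lt.2 h'), if_pos h, if_neg (not_lt.2 h'),
        if_neg (by omega : ¬ max (k:ℕ) (l:ℕ) < i), if_neg (by omega : ¬ i ≤ min (k:ℕ) (l:ℕ))]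
      norm_num
    · rw [if_neg (not_lt.2 h), if_pos h', if_neg (not_lt.2 h), if_pos h',
        if_neg (by omega : ¬ max (k:ℕ) (l:ℕ) < i), if_neg (by omega : ¬ i ≤ min (k:ℕ) (l:ℕ))]
      norm_num
    · rw [if_neg (not_lt.2 h), if_neg (not_lt.2 h'), if_neg (not_lt.2 h), if_neg (not_lt.2 h'),
        if_neg (by omega : ¬ max (k:ℕ) (l:ℕ) < i), if_pos (le_min h h')]
      norm_num
  rw [Finset.sum_congr rfl fun i _ => h1 i, Finset.sum_add_distrib,
    Finset.sum_boole, Finset.sum_boole]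
  have hk := k.isLt; have hl := l.isLt
  have e1 : Finset.filter (fun i => max (k:ℕ) (l:ℕ) < i) (Finset.Icc 1 (q-1))
      = Finset.Icc (max (k:ℕ) (l:ℕ) + 1) (q-1) := by
    ext i; simp [Finset.mem_Icc, Finset.mem_filter]; omega
  have e2 : Finset.filter (fun i => i ≤ min (k:ℕ) (l:ℕ)) (Finset.Icc 1 (q-1))
      = Finset.Icc 1 (min (k:ℕ) (l:ℕ)) := by
    ext i; simp [Finset.mem_Icc, Finset.mem_filter]; omega
  rw [e1, e2, Nat.card_Icc, Nat.card_Icc, Nat.add_sub_cancel]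
  have habs : |((k : ℕ) : ℝ) - ((l : ℕ) : ℝ)|
      = ((max (k:ℕ) (l:ℕ) : ℕ) : ℝ) - ((min (k:ℕ) (l:ℕ) : ℕ) : ℝ) := by
    rcases le_total (k:ℕ) (l:ℕ) with h | h
    · rw [max_eq_right h, min_eq_left h, abs_sub_comm,
        abs_of_nonneg (sub_nonneg.2 (Nat.cast_le.2 h))]
    · rw [max_eq_left h, min_eq_right h,
        abs_of_nonneg (sub_nonneg.2 (Nat.cast_le.2 h))]
  rw [habs]
  have hM : max (k:ℕ) (l:ℕ) ≤ q - 1 := max_le (by omega) (by omega)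
  have hcast : ((q - 1 + 1 - (max (k:ℕ) (l:ℕ) + 1) : ℕ) : ℝ)
      = (q:ℝ) - 1 - ((max (k:ℕ) (l:ℕ) : ℕ) : ℝ) := by
    have h2 : q - 1 + 1 - (max (k:ℕ) (l:ℕ) + 1) = q - 1 - max (k:ℕ) (l:ℕ) := by omega
    rw [h2, Nat.cast_sub hM, Nat.cast_sub hq]; norm_num
  rw [hcast]; ring

theorem Pmat_posSemidef (q : ℕ) (hq : 1 ≤ q) :
    (Pmat q).PosSemidef ∧
      Pmat q = ∑ i ∈ Finset.Icc 1 (q - 1),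
        (Matrix.vecMulVec (onesVec q i) (onesVec q i) +
          Matrix.vecMulVec (onesVec' q i) (onesVec' q i)) := by
  refine ⟨?_, decomp q hq⟩
  rw [decomp q hq]
  exact Finset.sum_induction _ (fun M : Matrix (Fin q) (Fin q) ℝ => M.PosSemidef)
    (fun a b ha hb => ha.add hb) Matrix.PosSemidef.zero
    (fun i _ => (vecMulVec_self_posSemidef _).add (vecMulVec_self_posSemidef _))
end
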